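/- arXiv:2409.00276 — 6 statements merged into one kernel-verified Lean document; each statement's English description precedes it below -/
import Mathlib

section
/- The ground-truth matrix Ā is a global minimizer over A ∈ ℝ^{n×m} of the loss g(A) = Σ_{t=0}^{T−1} ‖(Ā − A) f(x_t) + d̄_t‖₂ if and only if for every matrix Z ∈ ℝ^{m×n} it holds that Σ_{t∈K} d̂_tᵀ Zᵀ f(x_t) ≤ Σ_{t∈K^c} ‖Zᵀ f(x_t)‖₂. -/
open Matrix
open scoped BigOperators Classical

/-- Euclidean norm of a vector in `ℝ^k`. -/
noncomputable def e2norm {k : ℕ} (v : Fin k → ℝ) : ℝ := Real.sqrt (∑ i, (v i) ^ 2)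

/-- Normalized attack direction `d̂ = d / ‖d‖₂`. -/
noncomputable def dhat {k : ℕ} (v : Fin k → ℝ) : Fin k → ℝ := (e2norm v)⁻¹ • v

lemma e2norm_nonneg {k : ℕ} (v : Fin k → ℝ) : 0 ≤ e2norm v := Real.sqrt_nonneg _

lemma e2norm_sq {k : ℕ} (v : Fin k → ℝ) : e2norm v ^ 2 = v ⬝ᵥ v := by
  rw [e2norm, Real.sq_sqrt (Finset.sum_nonneg fun i _ => sq_nonneg _)]
  simp [dotProduct, sq]

lemma e2norm_eq_sqrt_dot {k : ℕ} (v : Fin k → ℝ) : e2norm v = Real.sqrt (v ⬝ᵥ v) := by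
  rw [← e2norm_sq, Real.sqrt_sq (e2norm_nonneg v)]

lemma e2norm_zero {k : ℕ} : e2norm (0 : Fin k → ℝ) = 0 := by simp [e2norm]

lemma e2norm_pos {k : ℕ} {v : Fin k → ℝ} (h : v ≠ 0) : 0 < e2norm v := by
  rcases (e2norm_nonneg v).lt_or_eq with h' | h'
  · exact h'
  · exfalso; apply h
    have h2 : v ⬝ᵥ v = 0 := by rw [← e2norm_sq, ← h']; ring
    exact (dotProduct_self_eq_zero).1 h2

lemma e2norm_smul {k : ℕ} (c : ℝ) (v : Fin k → ℝ) : e2norm (c • v) = |c| * e2norm v := by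
  simp only [e2norm, Pi.smul_apply, smul_eq_mul, mul_pow, ← Finset.mul_sum]
  rw [Real.sqrt_mul (sq_nonneg c), Real.sqrt_sq_eq_abs]

lemma e2norm_neg {k : ℕ} (v : Fin k → ℝ) : e2norm (-v) = e2norm v := by
  have := e2norm_smul (-1) v
  simpa using this

lemma cs {k : ℕ} (v w : Fin k → ℝ) : v ⬝ᵥ w ≤ e2norm v * e2norm w := by
  simpa [dotProduct, e2norm] using Real.sum_mul_le_sqrt_mul_sqrt Finset.univ v w

lemma dhat_dot_le {k : ℕ} {d : Fin k → ℝ} (hd : d ≠ 0) (u : Fin k → ℝ) :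
    dhat d ⬝ᵥ u ≤ e2norm u := by
  have hpos := e2norm_pos hd
  have hcs := cs d u
  have h1 : dhat d ⬝ᵥ u = (e2norm d)⁻¹ * (d ⬝ᵥ u) := by
    simp [dhat, smul_dotProduct]
  rw [h1, inv_mul_le_iff₀ hpos]
  linarith

lemma dhat_dot_self {k : ℕ} {d : Fin k → ℝ} (hd : d ≠ 0) :
    dhat d ⬝ᵥ d = e2norm d := by
  have hpos := e2norm_pos hd
  have h1 : dhat d ⬝ᵥ d = (e2norm d)⁻¹ * (d ⬝ᵥ d) := by
    simp [dhat, smul_dotProduct]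
  rw [h1, ← e2norm_sq]
  field_simp

lemma sqrt_quad_le {a h : ℝ} (ha : 0 < a) (hh : 0 ≤ a ^ 2 + h) :
    Real.sqrt (a ^ 2 + h) ≤ a + h / (2 * a) := by
  have hr : 0 ≤ a + h / (2 * a) := by
    have h2a : 0 < 2 * a := by linarith
    have hmul : (a + h / (2 * a)) * (2 * a) = 2 * a ^ 2 + h := by
      field_simp
    have hnn : (0:ℝ) * (2 * a) ≤ (a + h / (2 * a)) * (2 * a) := by
      rw [hmul]; nlinarith [sq_nonneg a]
    exact le_of_mul_le_mul_right hnn h2a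
  have hsq : a ^ 2 + h ≤ (a + h / (2 * a)) ^ 2 := by
    have h4 : 0 < 4 * a ^ 2 := by positivity
    have : (a + h / (2 * a)) ^ 2 = a ^ 2 + h + h ^ 2 / (4 * a ^ 2) := by
      field_simp
      ring
    nlinarith [div_nonneg (sq_nonneg h) h4.le]
  calc Real.sqrt (a ^ 2 + h) ≤ Real.sqrt ((a + h / (2 * a)) ^ 2) := Real.sqrt_le_sqrt hsq
    _ = a + h / (2 * a) := Real.sqrt_sq hr

lemma e2norm_smul_add_le {k : ℕ} {dv : Fin k → ℝ} (hd : dv ≠ 0) (v : Fin k → ℝ) (ε : ℝ) :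
    e2norm (ε • v + dv) ≤
      e2norm dv + ε * (dhat dv ⬝ᵥ v) + ε ^ 2 * (e2norm v) ^ 2 / (2 * e2norm dv) := by
  set a := e2norm dv with ha_def
  have ha : 0 < a := e2norm_pos hd
  set h : ℝ := 2 * ε * (v ⬝ᵥ dv) + ε ^ 2 * (v ⬝ᵥ v) with hh_def
  have expand : (ε • v + dv) ⬝ᵥ (ε • v + dv) = a ^ 2 + h := by
    rw [ha_def, e2norm_sq, hh_def]
    simp only [add_dotProduct, dotProduct_add, smul_dotProduct, dotProduct_smul,
      smul_eq_mul, dotProduct_comm dv v]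
    ring
  have hnn : 0 ≤ a ^ 2 + h := by
    rw [← expand, ← e2norm_sq]
    exact sq_nonneg _
  have h1 : e2norm (ε • v + dv) = Real.sqrt (a ^ 2 + h) := by
    rw [e2norm_eq_sqrt_dot, expand]
  rw [h1]
  refine (sqrt_quad_le ha hnn).trans_eq ?_
  have hdot : dhat dv ⬝ᵥ v = a⁻¹ * (dv ⬝ᵥ v) := by
    simp [dhat, smul_dotProduct, ha_def]
  rw [hh_def, hdot, ← e2norm_sq, dotProduct_comm v dv]
  field_simp
  ring

lemma split_sum (T : ℕ) {n : ℕ} (d : ℕ → (Fin n → ℝ)) (g : ℕ → ℝ) :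
    ∑ t ∈ Finset.range T, g t =
      (∑ t ∈ (Finset.range T).filter (fun t => d t ≠ 0), g t) +
      ∑ t ∈ (Finset.range T).filter (fun t => d t = 0), g t := by
  rw [← Finset.sum_filter_add_sum_filter_not (Finset.range T) (fun t => d t ≠ 0) g]
  congr 1
  apply Finset.sum_congr _ (fun _ _ => rfl)
  ext t
  simp [not_not]

/-- Theorem 2.1, necessary and sufficient condition for optimality.
`Ā` is a global minimizer of `g(A) = Σ_{t<T} ‖(Ā − A) f(x_t) + d̄_t‖₂` iff for every
`Z ∈ ℝ^{m×n}`, `Σ_{t∈K} d̂_tᵀ Zᵀ f(x_t) ≤ Σ_{t∈K^c} ‖Zᵀ f(x_t)‖₂`. -/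
theorem groundTruth_isGlobalMin_iff
    (T n m : ℕ) (hT : 0 < T) (hn : 0 < n) (hm : 0 < m)
    (f : (Fin n → ℝ) → (Fin m → ℝ))
    (Abar : Matrix (Fin n) (Fin m) ℝ)
    (d : ℕ → (Fin n → ℝ)) (x : ℕ → (Fin n → ℝ))
    (hx0 : x 0 = 0)
    (hxstep : ∀ t < T, x (t + 1) = Abar.mulVec (f (x t)) + d t) :
    (∀ A : Matrix (Fin n) (Fin m) ℝ,
        ∑ t ∈ Finset.range T, e2norm ((Abar - Abar).mulVec (f (x t)) + d t) ≤
          ∑ t ∈ Finset.range T, e2norm ((Abar - A).mulVec (f (x t)) + d t))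
      ↔
    (∀ Z : Matrix (Fin m) (Fin n) ℝ,
        ∑ t ∈ (Finset.range T).filter (fun t => d t ≠ 0),
            dhat (d t) ⬝ᵥ Zᵀ.mulVec (f (x t)) ≤
          ∑ t ∈ (Finset.range T).filter (fun t => d t = 0),
            e2norm (Zᵀ.mulVec (f (x t)))) := by
  classical
  set F : ℕ → (Fin m → ℝ) := fun t => f (x t) with hF
  set K : Finset ℕ := (Finset.range T).filter (fun t => d t ≠ 0) with hK
  set Kc : Finset ℕ := (Finset.range T).filter (fun t => d t = 0) with hKc
  -- the left side simplifies
  have hzero : ∀ t, (Abar - Abar).mulVec (F t) + d t = d t := by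
    intro t; simp [sub_self, zero_mulVec]
  have hLHS : (∀ A : Matrix (Fin n) (Fin m) ℝ,
      ∑ t ∈ Finset.range T, e2norm ((Abar - Abar).mulVec (f (x t)) + d t) ≤
        ∑ t ∈ Finset.range T, e2norm ((Abar - A).mulVec (f (x t)) + d t)) ↔
      (∀ B : Matrix (Fin n) (Fin m) ℝ,
      ∑ t ∈ Finset.range T, e2norm (d t) ≤
        ∑ t ∈ Finset.range T, e2norm (B.mulVec (F t) + d t)) := by
    constructor
    · intro h B
      have := h (Abar - B)
      simp only [sub_self, zero_mulVec, zero_add] at this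
      simpa [sub_sub_cancel] using this
    · intro h A
      have := h (Abar - A)
      simp only [sub_self, zero_mulVec, zero_add]
      exact this
  rw [hLHS]
  -- sum of norms of d over range T equals sum over K
  have hdsum : ∑ t ∈ Finset.range T, e2norm (d t) = ∑ t ∈ K, e2norm (d t) := by
    rw [split_sum T d]
    have : ∑ t ∈ Kc, e2norm (d t) = 0 := by
      apply Finset.sum_eq_zero
      intro t ht
      rw [hKc, Finset.mem_filter] at ht
      rw [ht.2, e2norm_zero]
    rw [← hK, ← hKc, this, add_zero]
  constructor
  · -- forward direction
    intro hopt Z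
    -- key claim for arbitrary B
    have key : ∀ B : Matrix (Fin n) (Fin m) ℝ,
        0 ≤ (∑ t ∈ K, dhat (d t) ⬝ᵥ B.mulVec (F t)) + ∑ t ∈ Kc, e2norm (B.mulVec (F t)) := by
      intro B
      set S : ℝ := (∑ t ∈ K, dhat (d t) ⬝ᵥ B.mulVec (F t)) + ∑ t ∈ Kc, e2norm (B.mulVec (F t))
        with hS
      set C : ℝ := ∑ t ∈ K, (e2norm (B.mulVec (F t))) ^ 2 / (2 * e2norm (d t)) with hC
      have hCnn : 0 ≤ C := by
        apply Finset.sum_nonneg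
        intro t ht
        rw [hK, Finset.mem_filter] at ht
        have := e2norm_pos ht.2
        positivity
      have step : ∀ ε : ℝ, 0 < ε → 0 ≤ S + ε * C := by
        intro ε hε
        have h0 := hopt (ε • B)
        have hsmul : ∀ t, (ε • B).mulVec (F t) = ε • B.mulVec (F t) := by
          intro t; rw [smul_mulVec]
        simp only [hsmul] at h0
        rw [hdsum, split_sum T d (fun t => e2norm (ε • B.mulVec (F t) + d t)), ← hK, ← hKc]
          at h0
        -- bound the K part
        have hKbound : ∑ t ∈ K, e2norm (ε • B.mulVec (F t) + d t) ≤
            ∑ t ∈ K, (e2norm (d t) + ε * (dhat (d t) ⬝ᵥ B.mulVec (F t)) +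
              ε ^ 2 * ((e2norm (B.mulVec (F t))) ^ 2 / (2 * e2norm (d t)))) := by
          apply Finset.sum_le_sum
          intro t ht
          rw [hK, Finset.mem_filter] at ht
          have := e2norm_smul_add_le ht.2 (B.mulVec (F t)) ε
          have hrw : ε ^ 2 * (e2norm (B.mulVec (F t))) ^ 2 / (2 * e2norm (d t)) =
              ε ^ 2 * ((e2norm (B.mulVec (F t))) ^ 2 / (2 * e2norm (d t))) := by ring
          linarith [hrw ▸ this]
        -- the Kc part
        have hKcval : ∑ t ∈ Kc, e2norm (ε • B.mulVec (F t) + d t) =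
            ε * ∑ t ∈ Kc, e2norm (B.mulVec (F t)) := by
          rw [Finset.mul_sum]
          apply Finset.sum_congr rfl
          intro t ht
          rw [hKc, Finset.mem_filter] at ht
          rw [ht.2, add_zero, e2norm_smul, abs_of_pos hε]
        rw [hKcval] at h0
        have hsplit : ∑ t ∈ K, (e2norm (d t) + ε * (dhat (d t) ⬝ᵥ B.mulVec (F t)) +
              ε ^ 2 * ((e2norm (B.mulVec (F t))) ^ 2 / (2 * e2norm (d t)))) =
            (∑ t ∈ K, e2norm (d t)) + ε * (∑ t ∈ K, dhat (d t) ⬝ᵥ B.mulVec (F t)) +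
              ε ^ 2 * C := by
          rw [hC, Finset.mul_sum, Finset.mul_sum, ← Finset.sum_add_distrib,
            ← Finset.sum_add_distrib]
        have hmain : 0 ≤ ε * (S + ε * C) := by
          have := le_trans h0 (by linarith [hKbound] :
            ∑ t ∈ K, e2norm (ε • B.mulVec (F t) + d t) +
              ε * ∑ t ∈ Kc, e2norm (B.mulVec (F t)) ≤
            (∑ t ∈ K, e2norm (d t)) + ε * (∑ t ∈ K, dhat (d t) ⬝ᵥ B.mulVec (F t)) +
              ε ^ 2 * C + ε * ∑ t ∈ Kc, e2norm (B.mulVec (F t)))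
          rw [hS]
          nlinarith [this]
        nlinarith [hmain, hε]
      by_contra hSneg
      push_neg at hSneg
      have hεpos : 0 < -S / (C + 1) := by
        apply div_pos (by linarith) (by linarith)
      have h1 := step (-S / (C + 1)) hεpos
      have h2 : (0:ℝ) ≤ (S + -S / (C + 1) * C) * (C + 1) := mul_nonneg h1 (by linarith)
      have h3 : (S + -S / (C + 1) * C) * (C + 1) = S := by
        field_simp
        ring
      rw [h3] at h2
      linarith
    -- apply key to B = -Zᵀ
    have hk := key (-Zᵀ)
    have e1 : ∀ t, (-Zᵀ).mulVec (F t) = -(Zᵀ.mulVec (F t)) := by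
      intro t; rw [neg_mulVec]
    simp only [e1, dotProduct_neg, e2norm_neg] at hk
    rw [Finset.sum_neg_distrib] at hk
    simp only [hF] at hk
    linarith
  · -- backward direction
    intro hZ B
    rw [hdsum, split_sum T d (fun t => e2norm (B.mulVec (F t) + d t))]
    -- hypothesis applied to -Bᵀ
    have h1 := hZ (-Bᵀ)
    have e1 : ∀ t, ((-Bᵀ)ᵀ).mulVec (f (x t)) = -(B.mulVec (F t)) := by
      intro t; rw [transpose_neg, transpose_transpose, neg_mulVec]
    simp only [e1, dotProduct_neg, e2norm_neg] at h1
    rw [Finset.sum_neg_distrib] at h1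
    have hKceq : ∑ t ∈ Kc, e2norm (B.mulVec (F t) + d t) =
        ∑ t ∈ Kc, e2norm (B.mulVec (F t)) := by
      apply Finset.sum_congr rfl
      intro t ht
      rw [hKc, Finset.mem_filter] at ht
      rw [ht.2, add_zero]
    -- termwise lower bound on K
    have hKbound : ∑ t ∈ K, (e2norm (d t) + dhat (d t) ⬝ᵥ B.mulVec (F t)) ≤
        ∑ t ∈ K, e2norm (B.mulVec (F t) + d t) := by
      apply Finset.sum_le_sum
      intro t ht
      rw [hK, Finset.mem_filter] at ht
      have hle := dhat_dot_le ht.2 (B.mulVec (F t) + d t)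
      rw [dotProduct_add, dhat_dot_self ht.2] at hle
      linarith
    rw [Finset.sum_add_distrib] at hKbound
    linarith [hKceq]
end

section
/- If for every matrix Z ∈ ℝ^{m×n} it holds that Σ_{t∈K} ‖Zᵀ f(x_t)‖₂ ≤ Σ_{t∈K^c} ‖Zᵀ f(x_t)‖₂, then the ground-truth matrix Ā is a global minimizer over A ∈ ℝ^{n×m} of the loss g(A) = Σ_{t=0}^{T−1} ‖(Ā − A) f(x_t) + d̄_t‖₂. -/
open Matrix
open scoped BigOperators Classical

lemma e2norm_eq_norm {k : ℕ} (v : Fin k → ℝ) :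
    e2norm v = ‖(WithLp.equiv 2 (Fin k → ℝ)).symm v‖ := by
  rw [EuclideanSpace.norm_eq, e2norm]
  congr 1
  apply Finset.sum_congr rfl
  intro i _
  simp [sq_abs]

lemma e2norm_sub_le {k : ℕ} (a b : Fin k → ℝ) :
    e2norm b - e2norm a ≤ e2norm (a + b) := by
  simp only [e2norm_eq_norm, map_add]
  have := norm_sub_norm_le ((WithLp.equiv 2 (Fin k → ℝ)).symm b) (-(WithLp.equiv 2 (Fin k → ℝ)).symm a)
  rw [norm_neg, sub_neg_eq_add, add_comm] at this
  exact this

/-- Corollary 2.2, sufficient condition for optimality.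
If for every `Z ∈ ℝ^{m×n}`, `Σ_{t∈K} ‖Zᵀ f(x_t)‖₂ ≤ Σ_{t∈K^c} ‖Zᵀ f(x_t)‖₂`, then `Ā`
is a global minimizer of `g(A) = Σ_{t<T} ‖(Ā − A) f(x_t) + d̄_t‖₂`. -/
theorem sufficient_condition_for_optimality
    (T n m : ℕ) (hT : 0 < T) (hn : 0 < n) (hm : 0 < m)
    (f : (Fin n → ℝ) → (Fin m → ℝ))
    (Abar : Matrix (Fin n) (Fin m) ℝ)
    (d : ℕ → (Fin n → ℝ)) (x : ℕ → (Fin n → ℝ))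
    (hx0 : x 0 = 0)
    (hxstep : ∀ t < T, x (t + 1) = Abar.mulVec (f (x t)) + d t)
    (hsuf : ∀ Z : Matrix (Fin m) (Fin n) ℝ,
        ∑ t ∈ (Finset.range T).filter (fun t => d t ≠ 0),
            e2norm (Zᵀ.mulVec (f (x t))) ≤
          ∑ t ∈ (Finset.range T).filter (fun t => d t = 0),
            e2norm (Zᵀ.mulVec (f (x t)))) :
    ∀ A : Matrix (Fin n) (Fin m) ℝ,
      ∑ t ∈ Finset.range T, e2norm ((Abar - Abar).mulVec (f (x t)) + d t) ≤
        ∑ t ∈ Finset.range T, e2norm ((Abar - A).mulVec (f (x t)) + d t) := by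
  intro A
  set c : ℕ → (Fin n → ℝ) := fun t => (Abar - A).mulVec (f (x t)) with hc
  have hkey := hsuf (Abar - A)ᵀ
  rw [transpose_transpose] at hkey
  have hL : ∀ t, (Abar - Abar).mulVec (f (x t)) + d t = d t := by
    intro t; simp [Matrix.zero_mulVec]
  simp only [hL]
  -- split both sums
  have hsplit := Finset.sum_filter_add_sum_filter_not (Finset.range T)
    (fun t => d t = 0) (fun t => e2norm (d t))
  have hsplit2 := Finset.sum_filter_add_sum_filter_not (Finset.range T)
    (fun t => d t = 0) (fun t => e2norm (c t + d t))
  rw [← hsplit, ← hsplit2]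
  have h1 : ∑ t ∈ (Finset.range T).filter (fun t => d t = 0), e2norm (d t) = 0 := by
    apply Finset.sum_eq_zero
    intro t ht
    rw [(Finset.mem_filter.mp ht).2, e2norm_zero]
  have h2 : ∑ t ∈ (Finset.range T).filter (fun t => d t = 0), e2norm (c t + d t)
      = ∑ t ∈ (Finset.range T).filter (fun t => d t = 0), e2norm (c t) := by
    apply Finset.sum_congr rfl
    intro t ht
    rw [(Finset.mem_filter.mp ht).2, add_zero]
  rw [h1, h2, zero_add]
  have h3 : ∑ t ∈ (Finset.range T).filter (fun t => ¬ d t = 0), (e2norm (d t) - e2norm (c t))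
      ≤ ∑ t ∈ (Finset.range T).filter (fun t => ¬ d t = 0), e2norm (c t + d t) :=
    Finset.sum_le_sum (fun t _ => e2norm_sub_le (c t) (d t))
  rw [Finset.sum_sub_distrib] at h3
  have hkey' : ∑ t ∈ (Finset.range T).filter (fun t => ¬ d t = 0), e2norm (c t)
      ≤ ∑ t ∈ (Finset.range T).filter (fun t => d t = 0), e2norm (c t) := hkey
  linarith
end

section
/- Suppose that for every matrix Z ∈ ℝ^{m×n} it holds that Σ_{t∈K} d̂_tᵀ Zᵀ f(x_t) ≤ Σ_{t∈K^c} ‖Zᵀ f(x_t)‖₂ (so that Ā is a global minimizer). Then Ā is the UNIQUE global minimizer over A ∈ ℝ^{n×m} of the loss g(A) = Σ_{t=0}^{T−1} ‖(Ā − A) f(x_t) + d̄_t‖₂ if and only if for every nonzero Z ∈ ℝ^{m×n}: whenever Σ_{t∈K} d̂_tᵀ Zᵀ f(x_t) = Σ_{t∈K^c} ‖Zᵀ f(x_t)‖₂, it follows that Σ_{t∈K} |d̂_tᵀ Zᵀ f(x_t)| < Σ_{t∈K} ‖Zᵀ f(x_t)‖₂. -/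
open Matrix
open scoped BigOperators Classical

namespace E2Aux

lemma e2norm_nonneg {k : ℕ} (v : Fin k → ℝ) : 0 ≤ e2norm v := Real.sqrt_nonneg _

lemma e2norm_sq {k : ℕ} (v : Fin k → ℝ) : e2norm v ^ 2 = ∑ i, (v i) ^ 2 :=
  Real.sq_sqrt (Finset.sum_nonneg fun i _ => sq_nonneg _)

lemma e2norm_eq_zero {k : ℕ} {v : Fin k → ℝ} (h : e2norm v = 0) : v = 0 := by
  have h2 : ∑ i, (v i) ^ 2 = 0 := by
    have := e2norm_sq v
    rw [h] at this
    simpa using this.symm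
  funext i
  have := (Finset.sum_eq_zero_iff_of_nonneg (fun i _ => sq_nonneg (v i))).1 h2 i
    (Finset.mem_univ i)
  exact pow_eq_zero_iff (two_ne_zero) |>.1 this

lemma e2norm_zero {k : ℕ} : e2norm (0 : Fin k → ℝ) = 0 := by simp [e2norm]

lemma e2norm_pos {k : ℕ} {v : Fin k → ℝ} (h : v ≠ 0) : 0 < e2norm v := by
  rcases lt_or_eq_of_le (e2norm_nonneg v) with h1 | h1
  · exact h1
  · exact absurd (e2norm_eq_zero h1.symm) h

lemma e2norm_smul {k : ℕ} (a : ℝ) (v : Fin k → ℝ) : e2norm (a • v) = |a| * e2norm v := by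
  unfold e2norm
  rw [← Real.sqrt_sq_eq_abs, ← Real.sqrt_mul (sq_nonneg a), Finset.mul_sum]
  congr 1
  refine Finset.sum_congr rfl fun i _ => ?_
  simp [mul_pow]

lemma e2norm_neg {k : ℕ} (v : Fin k → ℝ) : e2norm (-v) = e2norm v := by
  have := e2norm_smul (-1) v
  simpa using this

lemma dot_self {k : ℕ} (v : Fin k → ℝ) : v ⬝ᵥ v = e2norm v ^ 2 := by
  rw [e2norm_sq]
  simp [dotProduct, sq]

lemma dot_le {k : ℕ} (u v : Fin k → ℝ) : u ⬝ᵥ v ≤ e2norm u * e2norm v := by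
  have h := Finset.sum_mul_sq_le_sq_mul_sq Finset.univ u v
  have h2 : (u ⬝ᵥ v) ^ 2 ≤ (e2norm u * e2norm v) ^ 2 := by
    rw [mul_pow, e2norm_sq, e2norm_sq]
    exact h
  have h3 : 0 ≤ e2norm u * e2norm v := mul_nonneg (e2norm_nonneg u) (e2norm_nonneg v)
  nlinarith [abs_nonneg (u ⬝ᵥ v), le_abs_self (u ⬝ᵥ v), sq_abs (u ⬝ᵥ v)]

lemma abs_dot_le {k : ℕ} (u v : Fin k → ℝ) : |u ⬝ᵥ v| ≤ e2norm u * e2norm v := by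
  rcases abs_cases (u ⬝ᵥ v) with ⟨h, _⟩ | ⟨h, _⟩
  · rw [h]; exact dot_le u v
  · rw [h, ← neg_dotProduct]
    have := dot_le (-u) v
    rwa [e2norm_neg] at this

lemma e2norm_dhat {k : ℕ} {v : Fin k → ℝ} (h : v ≠ 0) : e2norm (dhat v) = 1 := by
  unfold dhat
  rw [e2norm_smul, abs_of_nonneg (inv_nonneg.2 (e2norm_nonneg v))]
  field_simp [(e2norm_pos h).ne']

lemma norm_mul_dhat_dot {k : ℕ} {v : Fin k → ℝ} (h : v ≠ 0) (b : Fin k → ℝ) :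
    e2norm v * (dhat v ⬝ᵥ b) = v ⬝ᵥ b := by
  unfold dhat
  rw [smul_dotProduct, smul_eq_mul]
  field_simp [(e2norm_pos h).ne']

lemma abs_dhat_dot_le {k : ℕ} {v : Fin k → ℝ} (h : v ≠ 0) (b : Fin k → ℝ) :
    |dhat v ⬝ᵥ b| ≤ e2norm b := by
  have := abs_dot_le (dhat v) b
  rwa [e2norm_dhat h, one_mul] at this

lemma lower_bound {k : ℕ} {v : Fin k → ℝ} (h : v ≠ 0) (b : Fin k → ℝ) :
    e2norm v + dhat v ⬝ᵥ b ≤ e2norm (v + b) := by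
  have h1 : v ⬝ᵥ (v + b) ≤ e2norm v * e2norm (v + b) := dot_le v (v + b)
  have h2 : v ⬝ᵥ (v + b) = e2norm v ^ 2 + v ⬝ᵥ b := by rw [dotProduct_add, dot_self]
  have h3 := norm_mul_dhat_dot h b
  have hp := e2norm_pos h
  nlinarith

lemma e2norm_add_sq {k : ℕ} (u v : Fin k → ℝ) :
    e2norm (u + v) ^ 2 = e2norm u ^ 2 + 2 * (u ⬝ᵥ v) + e2norm v ^ 2 := by
  simp only [e2norm_sq, dotProduct, Pi.add_apply, Finset.mul_sum,
    ← Finset.sum_add_distrib]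
  exact Finset.sum_congr rfl fun i _ => by ring

lemma sub_smul_norm {k : ℕ} {v : Fin k → ℝ} (h : v ≠ 0) (b : Fin k → ℝ) (s : ℝ)
    (hsq : e2norm b ^ 2 = (dhat v ⬝ᵥ b) ^ 2)
    (hs : s * (dhat v ⬝ᵥ b) ≤ e2norm v) :
    e2norm (v - s • b) = e2norm v - s * (dhat v ⬝ᵥ b) := by
  have h3 := norm_mul_dhat_dot h b
  have h1 : e2norm (v - s • b) ^ 2 = (e2norm v - s * (dhat v ⬝ᵥ b)) ^ 2 := by
    have e1 : v - s • b = v + (-s) • b := by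
      funext i; simp [sub_eq_add_neg, neg_smul]
    rw [e1, e2norm_add_sq, e2norm_smul, dotProduct_smul, smul_eq_mul]
    have : (|(-s)| * e2norm b) ^ 2 = s ^ 2 * (dhat v ⬝ᵥ b) ^ 2 := by
      rw [mul_pow, sq_abs, ← hsq]; ring
    rw [this]
    linear_combination (2 * s) * h3
  have h2 : 0 ≤ e2norm v - s * (dhat v ⬝ᵥ b) := by linarith
  calc e2norm (v - s • b) = Real.sqrt (e2norm (v - s • b) ^ 2) :=
        (Real.sqrt_sq (e2norm_nonneg _)).symm
    _ = Real.sqrt ((e2norm v - s * (dhat v ⬝ᵥ b)) ^ 2) := by rw [h1]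
    _ = _ := Real.sqrt_sq h2

lemma eq_case {k : ℕ} {v : Fin k → ℝ} (h : v ≠ 0) (b : Fin k → ℝ)
    (heq : e2norm (v + b) = e2norm v + dhat v ⬝ᵥ b) :
    e2norm b = |dhat v ⬝ᵥ b| := by
  have h3 := norm_mul_dhat_dot h b
  have h1 : e2norm (v + b) ^ 2 = (e2norm v + dhat v ⬝ᵥ b) ^ 2 := by rw [heq]
  rw [e2norm_add_sq] at h1
  have h4 : e2norm b ^ 2 = (dhat v ⬝ᵥ b) ^ 2 := by nlinarith
  calc e2norm b = Real.sqrt (e2norm b ^ 2) := (Real.sqrt_sq (e2norm_nonneg _)).symm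
    _ = Real.sqrt ((dhat v ⬝ᵥ b) ^ 2) := by rw [h4]
    _ = _ := Real.sqrt_sq_eq_abs _

end E2Aux

/-- Theorem 3.1, necessary and sufficient condition for uniqueness.
Suppose the optimality condition `Σ_{t∈K} d̂_tᵀ Zᵀ f(x_t) ≤ Σ_{t∈K^c} ‖Zᵀ f(x_t)‖₂`
holds for all `Z`. Then `Ā` is the unique global minimizer of
`g(A) = Σ_{t<T} ‖(Ā − A) f(x_t) + d̄_t‖₂` iff for every nonzero `Z`:
`Σ_{t∈K} d̂_tᵀ Zᵀ f(x_t) = Σ_{t∈K^c} ‖Zᵀ f(x_t)‖₂` implies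
`Σ_{t∈K} |d̂_tᵀ Zᵀ f(x_t)| < Σ_{t∈K} ‖Zᵀ f(x_t)‖₂`. -/
theorem groundTruth_isUniqueGlobalMin_iff
    (T n m : ℕ) (hT : 0 < T) (hn : 0 < n) (hm : 0 < m)
    (f : (Fin n → ℝ) → (Fin m → ℝ))
    (Abar : Matrix (Fin n) (Fin m) ℝ)
    (d : ℕ → (Fin n → ℝ)) (x : ℕ → (Fin n → ℝ))
    (hx0 : x 0 = 0)
    (hxstep : ∀ t < T, x (t + 1) = Abar.mulVec (f (x t)) + d t)
    (hopt : ∀ Z : Matrix (Fin m) (Fin n) ℝ,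
        ∑ t ∈ (Finset.range T).filter (fun t => d t ≠ 0),
            dhat (d t) ⬝ᵥ Zᵀ.mulVec (f (x t)) ≤
          ∑ t ∈ (Finset.range T).filter (fun t => d t = 0),
            e2norm (Zᵀ.mulVec (f (x t)))) :
    (∀ A : Matrix (Fin n) (Fin m) ℝ, A ≠ Abar →
        ∑ t ∈ Finset.range T, e2norm ((Abar - Abar).mulVec (f (x t)) + d t) <
          ∑ t ∈ Finset.range T, e2norm ((Abar - A).mulVec (f (x t)) + d t))
      ↔
    (∀ Z : Matrix (Fin m) (Fin n) ℝ, Z ≠ 0 →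
        (∑ t ∈ (Finset.range T).filter (fun t => d t ≠ 0),
              dhat (d t) ⬝ᵥ Zᵀ.mulVec (f (x t)) =
            ∑ t ∈ (Finset.range T).filter (fun t => d t = 0),
              e2norm (Zᵀ.mulVec (f (x t)))) →
          ∑ t ∈ (Finset.range T).filter (fun t => d t ≠ 0),
              |dhat (d t) ⬝ᵥ Zᵀ.mulVec (f (x t))| <
            ∑ t ∈ (Finset.range T).filter (fun t => d t ≠ 0),
              e2norm (Zᵀ.mulVec (f (x t)))) := by
  classical
  have hsplit : ∀ F : ℕ → ℝ, ∑ t ∈ Finset.range T, F t =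
      ∑ t ∈ (Finset.range T).filter (fun t => d t ≠ 0), F t +
      ∑ t ∈ (Finset.range T).filter (fun t => d t = 0), F t := by
    intro F
    rw [← Finset.sum_filter_add_sum_filter_not (Finset.range T) (fun t => d t ≠ 0) F]
    congr 1
    apply Finset.sum_congr _ (fun _ _ => rfl)
    apply Finset.filter_congr
    intro t _
    simp
  set K := (Finset.range T).filter (fun t => d t ≠ 0) with hKdef
  set Kc := (Finset.range T).filter (fun t => d t = 0) with hKcdef
  have hdK : ∀ t ∈ K, d t ≠ 0 := fun t ht => (Finset.mem_filter.1 ht).2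
  have hdKc : ∀ t ∈ Kc, d t = 0 := fun t ht => (Finset.mem_filter.1 ht).2
  have hbase : ∑ t ∈ Finset.range T, e2norm ((Abar - Abar).mulVec (f (x t)) + d t)
      = ∑ t ∈ K, e2norm (d t) := by
    simp only [sub_self, Matrix.zero_mulVec, zero_add]
    rw [hsplit]
    have h0 : ∑ t ∈ Kc, e2norm (d t) = 0 :=
      Finset.sum_eq_zero (fun t ht => by rw [hdKc t ht, E2Aux.e2norm_zero])
    rw [h0, add_zero]
  constructor
  · -- uniqueness → condition
    intro hU Z hZ hEq
    by_contra hcon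
    push_neg at hcon
    have hterm : ∀ t ∈ K, |dhat (d t) ⬝ᵥ Zᵀ.mulVec (f (x t))| ≤
        e2norm (Zᵀ.mulVec (f (x t))) := fun t ht => E2Aux.abs_dhat_dot_le (hdK t ht) _
    have hsumeq : ∑ t ∈ K, |dhat (d t) ⬝ᵥ Zᵀ.mulVec (f (x t))| =
        ∑ t ∈ K, e2norm (Zᵀ.mulVec (f (x t))) :=
      le_antisymm (Finset.sum_le_sum hterm) hcon
    have heqterm : ∀ t ∈ K, |dhat (d t) ⬝ᵥ Zᵀ.mulVec (f (x t))| =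
        e2norm (Zᵀ.mulVec (f (x t))) :=
      (Finset.sum_eq_sum_iff_of_le hterm).1 hsumeq
    -- choose a small positive step size s
    set q : ℕ → ℝ := fun t => e2norm (d t) / (|dhat (d t) ⬝ᵥ Zᵀ.mulVec (f (x t))| + 1)
      with hqdef
    set s : ℝ := if hKne : K.Nonempty then min 1 (K.inf' hKne q) else 1 with hsdef
    have hspos : 0 < s := by
      rw [hsdef]
      split_ifs with hKne
      · refine lt_min one_pos ?_
        rw [Finset.lt_inf'_iff]
        intro t ht
        exact div_pos (E2Aux.e2norm_pos (hdK t ht)) (by positivity)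
      · exact one_pos
    have hsle : ∀ t ∈ K, s * |dhat (d t) ⬝ᵥ Zᵀ.mulVec (f (x t))| ≤ e2norm (d t) := by
      intro t ht
      have h2 : (0:ℝ) < |dhat (d t) ⬝ᵥ Zᵀ.mulVec (f (x t))| + 1 := by positivity
      have h1 : s ≤ q t := by
        rw [hsdef, dif_pos ⟨t, ht⟩]
        exact (min_le_right _ _).trans (Finset.inf'_le q ht)
      have hq0 : 0 ≤ q t := div_nonneg (E2Aux.e2norm_nonneg _) h2.le
      have hqe : q t * (|dhat (d t) ⬝ᵥ Zᵀ.mulVec (f (x t))| + 1) = e2norm (d t) := by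
        rw [hqdef]
        field_simp
      nlinarith [mul_le_mul_of_nonneg_right h1
        (abs_nonneg (dhat (d t) ⬝ᵥ Zᵀ.mulVec (f (x t))))]
    set A : Matrix (Fin n) (Fin m) ℝ := Abar + s • Zᵀ with hAdef
    have hAne : A ≠ Abar := by
      intro h
      apply hZ
      rw [hAdef, add_eq_left] at h
      rcases smul_eq_zero.mp h with h' | h'
      · exact absurd h' hspos.ne'
      · exact Matrix.transpose_eq_zero.mp h'
    have hUA := hU A hAne
    rw [hbase] at hUA
    have hAB : Abar - A = -(s • Zᵀ) := by rw [hAdef]; abel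
    have hterm2 : ∀ t, (Abar - A).mulVec (f (x t)) + d t
        = d t - s • (Zᵀ.mulVec (f (x t))) := by
      intro t
      rw [hAB, Matrix.neg_mulVec, Matrix.smul_mulVec, neg_add_eq_sub]
    have hKsum : ∀ t ∈ K, e2norm (d t - s • (Zᵀ.mulVec (f (x t))))
        = e2norm (d t) - s * (dhat (d t) ⬝ᵥ Zᵀ.mulVec (f (x t))) := by
      intro t ht
      apply E2Aux.sub_smul_norm (hdK t ht)
      · rw [← heqterm t ht, sq_abs]
      · calc s * (dhat (d t) ⬝ᵥ Zᵀ.mulVec (f (x t)))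
            ≤ s * |dhat (d t) ⬝ᵥ Zᵀ.mulVec (f (x t))| :=
              mul_le_mul_of_nonneg_left (le_abs_self _) hspos.le
          _ ≤ e2norm (d t) := hsle t ht
    have hKcsum : ∀ t ∈ Kc, e2norm (d t - s • (Zᵀ.mulVec (f (x t))))
        = s * e2norm (Zᵀ.mulVec (f (x t))) := by
      intro t ht
      rw [hdKc t ht, zero_sub, E2Aux.e2norm_neg, E2Aux.e2norm_smul, abs_of_pos hspos]
    have htot : ∑ t ∈ Finset.range T, e2norm ((Abar - A).mulVec (f (x t)) + d t)
        = ∑ t ∈ K, e2norm (d t) := by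
      simp only [hterm2]
      rw [hsplit, Finset.sum_congr rfl hKsum, Finset.sum_congr rfl hKcsum,
        Finset.sum_sub_distrib, ← Finset.mul_sum, ← Finset.mul_sum, hEq]
      ring
    rw [htot] at hUA
    exact lt_irrefl _ hUA
  · -- condition → uniqueness
    intro hC A hAne
    rw [hbase]
    set Z : Matrix (Fin m) (Fin n) ℝ := (Abar - A)ᵀ with hZdef
    have hZT : Zᵀ = Abar - A := Matrix.transpose_transpose _
    have hZne : Z ≠ 0 := by
      rw [hZdef]
      intro h
      exact hAne (sub_eq_zero.mp (Matrix.transpose_eq_zero.mp h)).symm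
    rw [← hZT]
    -- optimality at -Z
    have hoptZ := hopt (-Z)
    simp only [Matrix.transpose_neg, Matrix.neg_mulVec, dotProduct_neg,
      E2Aux.e2norm_neg] at hoptZ
    rw [Finset.sum_neg_distrib] at hoptZ
    have hlow : ∀ t ∈ K, e2norm (d t) + dhat (d t) ⬝ᵥ Zᵀ.mulVec (f (x t)) ≤
        e2norm (Zᵀ.mulVec (f (x t)) + d t) := by
      intro t ht
      have := E2Aux.lower_bound (hdK t ht) (Zᵀ.mulVec (f (x t)))
      rwa [add_comm (d t)] at this
    have hKc2 : ∑ t ∈ Kc, e2norm (Zᵀ.mulVec (f (x t)) + d t) =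
        ∑ t ∈ Kc, e2norm (Zᵀ.mulVec (f (x t))) :=
      Finset.sum_congr rfl (fun t ht => by rw [hdKc t ht, add_zero])
    rcases lt_or_eq_of_le hoptZ with hlt | heqc
    · -- strict case
      have hK2 : ∑ t ∈ K, (e2norm (d t) + dhat (d t) ⬝ᵥ Zᵀ.mulVec (f (x t))) ≤
          ∑ t ∈ K, e2norm (Zᵀ.mulVec (f (x t)) + d t) := Finset.sum_le_sum hlow
      rw [Finset.sum_add_distrib] at hK2
      rw [hsplit, hKc2]
      linarith
    · -- equality case
      have hEq' : (∑ t ∈ K, dhat (d t) ⬝ᵥ (-Z)ᵀ.mulVec (f (x t))) =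
          ∑ t ∈ Kc, e2norm ((-Z)ᵀ.mulVec (f (x t))) := by
        simp only [Matrix.transpose_neg, Matrix.neg_mulVec, dotProduct_neg,
          E2Aux.e2norm_neg]
        rw [Finset.sum_neg_distrib]
        exact heqc
      have hCZ := hC (-Z) (neg_ne_zero.mpr hZne) hEq'
      simp only [Matrix.transpose_neg, Matrix.neg_mulVec, dotProduct_neg, abs_neg,
        E2Aux.e2norm_neg] at hCZ
      -- hCZ : ∑_K |lam| < ∑_K ‖b‖
      have hex : ∃ t ∈ K, e2norm (d t) + dhat (d t) ⬝ᵥ Zᵀ.mulVec (f (x t)) <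
          e2norm (Zᵀ.mulVec (f (x t)) + d t) := by
        by_contra hno
        push_neg at hno
        have heqt : ∀ t ∈ K, e2norm (Zᵀ.mulVec (f (x t))) =
            |dhat (d t) ⬝ᵥ Zᵀ.mulVec (f (x t))| := by
          intro t ht
          apply E2Aux.eq_case (hdK t ht)
          rw [add_comm]
          exact le_antisymm (hno t ht) (hlow t ht)
        rw [Finset.sum_congr rfl heqt] at hCZ
        exact lt_irrefl _ hCZ
      have hK3 : ∑ t ∈ K, (e2norm (d t) + dhat (d t) ⬝ᵥ Zᵀ.mulVec (f (x t))) <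
          ∑ t ∈ K, e2norm (Zᵀ.mulVec (f (x t)) + d t) := Finset.sum_lt_sum hlow hex
      rw [Finset.sum_add_distrib] at hK3
      rw [hsplit, hKc2]
      linarith
end

section
/- If for every nonzero matrix Z ∈ ℝ^{m×n} it holds that Σ_{t∈K} d̂_tᵀ Zᵀ f(x_t) < Σ_{t∈K^c} ‖Zᵀ f(x_t)‖₂ (strict inequality), then the ground-truth matrix Ā is the unique global minimizer over A ∈ ℝ^{n×m} of the loss g(A) = Σ_{t=0}^{T−1} ‖(Ā − A) f(x_t) + d̄_t‖₂. -/
open Matrix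
open scoped BigOperators Classical

noncomputable def toE {k : ℕ} (v : Fin k → ℝ) : EuclideanSpace ℝ (Fin k) := WithLp.toLp 2 v

lemma e2norm_eq {k : ℕ} (v : Fin k → ℝ) : e2norm v = ‖toE v‖ := by
  rw [EuclideanSpace.norm_eq]
  simp [e2norm, toE, Real.norm_eq_abs, sq_abs]

lemma inner_toE {k : ℕ} (u v : Fin k → ℝ) : (inner ℝ (toE u) (toE v) : ℝ) = u ⬝ᵥ v := by
  simp [toE, PiLp.inner_apply, RCLike.inner_apply, dotProduct, mul_comm]

lemma key {k : ℕ} (d v : Fin k → ℝ) (hd : d ≠ 0) :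
    e2norm d - dhat d ⬝ᵥ v ≤ e2norm (-v + d) := by
  have hnd : (0:ℝ) < ‖toE d‖ := by
    simpa [toE, norm_pos_iff] using (show toE d ≠ 0 from fun h => hd (by simpa [toE] using congrArg WithLp.ofLp h))
  have hcs : (inner ℝ (toE d) (toE (-v + d)) : ℝ) ≤ ‖toE d‖ * ‖toE (-v + d)‖ := real_inner_le_norm _ _
  have hdd : d ⬝ᵥ d = ‖toE d‖ ^ 2 := by
    rw [← inner_toE, real_inner_self_eq_norm_sq]
  have hinner : (inner ℝ (toE d) (toE (-v + d)) : ℝ) = -(d ⬝ᵥ v) + ‖toE d‖ ^ 2 := by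
    rw [inner_toE, dotProduct_add, dotProduct_neg, hdd]
  have hdot : dhat d ⬝ᵥ v = ‖toE d‖⁻¹ * (d ⬝ᵥ v) := by
    rw [dhat, e2norm_eq]
    simp [smul_dotProduct]
  rw [e2norm_eq, e2norm_eq, hdot]
  rw [hinner] at hcs
  have h1 : ‖toE d‖⁻¹ * ‖toE d‖ = 1 := inv_mul_cancel₀ (ne_of_gt hnd)
  have h2 := mul_le_mul_of_nonneg_left hcs (inv_nonneg.mpr hnd.le)
  have h3 : ‖toE d‖⁻¹ * (‖toE d‖ ^ 2) = ‖toE d‖ := by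
    field_simp
  rw [mul_add, ← mul_assoc, h1, one_mul, h3, mul_neg] at h2
  linarith

/-- Corollary 3.2, sufficient condition for uniqueness.
If for every nonzero `Z ∈ ℝ^{m×n}`,
`Σ_{t∈K} d̂_tᵀ Zᵀ f(x_t) < Σ_{t∈K^c} ‖Zᵀ f(x_t)‖₂`, then `Ā` is the unique global
minimizer of `g(A) = Σ_{t<T} ‖(Ā − A) f(x_t) + d̄_t‖₂`. -/
theorem sufficient_condition_for_uniqueness
    (T n m : ℕ) (hT : 0 < T) (hn : 0 < n) (hm : 0 < m)
    (f : (Fin n → ℝ) → (Fin m → ℝ))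
    (Abar : Matrix (Fin n) (Fin m) ℝ)
    (d : ℕ → (Fin n → ℝ)) (x : ℕ → (Fin n → ℝ))
    (hx0 : x 0 = 0)
    (hxstep : ∀ t < T, x (t + 1) = Abar.mulVec (f (x t)) + d t)
    (hstrict : ∀ Z : Matrix (Fin m) (Fin n) ℝ, Z ≠ 0 →
        ∑ t ∈ (Finset.range T).filter (fun t => d t ≠ 0),
            dhat (d t) ⬝ᵥ Zᵀ.mulVec (f (x t)) <
          ∑ t ∈ (Finset.range T).filter (fun t => d t = 0),
            e2norm (Zᵀ.mulVec (f (x t)))) :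
    ∀ A : Matrix (Fin n) (Fin m) ℝ, A ≠ Abar →
      ∑ t ∈ Finset.range T, e2norm ((Abar - Abar).mulVec (f (x t)) + d t) <
        ∑ t ∈ Finset.range T, e2norm ((Abar - A).mulVec (f (x t)) + d t) := by
  intro A hA
  have hZne : (A - Abar)ᵀ ≠ 0 := by
    intro h
    apply hA
    have h2 := congrArg Matrix.transpose h
    rw [Matrix.transpose_transpose, Matrix.transpose_zero] at h2
    exact sub_eq_zero.mp h2
  have hstr := hstrict _ hZne
  rw [Matrix.transpose_transpose] at hstr
  have hsplitL : ∑ t ∈ Finset.range T, e2norm ((Abar - Abar).mulVec (f (x t)) + d t)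
      = ∑ t ∈ (Finset.range T).filter (fun t => d t ≠ 0), e2norm (d t) := by
    rw [← Finset.sum_filter_add_sum_filter_not (Finset.range T) (fun t => d t ≠ 0)]
    have hz : ∀ t, (Abar - Abar).mulVec (f (x t)) + d t = d t := by
      intro t; simp [sub_self, Matrix.zero_mulVec]
    simp only [hz]
    have h0 : ∑ t ∈ (Finset.range T).filter (fun t => ¬ d t ≠ 0), e2norm (d t) = 0 := by
      apply Finset.sum_eq_zero
      intro t ht
      have hh := (Finset.mem_filter.mp ht).2
      simp only [not_not] at hh
      simp [hh, e2norm]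
    rw [h0, add_zero]
  rw [hsplitL]
  have hfilter : (Finset.range T).filter (fun t => ¬ d t ≠ 0)
      = (Finset.range T).filter (fun t => d t = 0) := by
    apply Finset.filter_congr
    intro t _
    simp [not_not]
  have hsplitR : ∑ t ∈ Finset.range T, e2norm ((Abar - A).mulVec (f (x t)) + d t)
      = ∑ t ∈ (Finset.range T).filter (fun t => d t ≠ 0),
          e2norm ((Abar - A).mulVec (f (x t)) + d t)
        + ∑ t ∈ (Finset.range T).filter (fun t => d t = 0),
          e2norm ((A - Abar).mulVec (f (x t))) := by
    rw [← Finset.sum_filter_add_sum_filter_not (Finset.range T) (fun t => d t ≠ 0), hfilter]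
    congr 1
    apply Finset.sum_congr rfl
    intro t ht
    have hdz := (Finset.mem_filter.mp ht).2
    have heq : (Abar - A) = -(A - Abar) := (neg_sub A Abar).symm
    rw [hdz, add_zero, heq, Matrix.neg_mulVec, e2norm_neg]
  rw [hsplitR]
  have hK : ∀ t ∈ (Finset.range T).filter (fun t => d t ≠ 0),
      e2norm (d t) - dhat (d t) ⬝ᵥ (A - Abar).mulVec (f (x t))
        ≤ e2norm ((Abar - A).mulVec (f (x t)) + d t) := by
    intro t ht
    have hdz := (Finset.mem_filter.mp ht).2
    have heq : (Abar - A).mulVec (f (x t)) = -((A - Abar).mulVec (f (x t))) := by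
      rw [← Matrix.neg_mulVec, neg_sub]
    rw [heq]
    exact key _ _ hdz
  have hsum := Finset.sum_le_sum hK
  rw [Finset.sum_sub_distrib] at hsum
  linarith
end

section
/- Consider the scalar first-order linear system (n = m = 1, f(x) = x): x₀ = 0 and x_{t+1} = ā x_t + d̄_t for t = 0,…,T−1 with ā ∈ ℝ and d̄_t ∈ ℝ. Then ā is the unique global minimizer over a ∈ ℝ of the loss g(a) = Σ_{t=0}^{T−1} |x_{t+1} − a x_t| if and only if |Σ_{t∈K} d̂_t x_t| < Σ_{t∈K^c} |x_t|. -/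
open scoped BigOperators Classical

private lemma aux_h1 (dt xt s : ℝ) (hd : dt ≠ 0) :
    dt / |dt| * (dt - s * xt) = |dt| - s * (dt / |dt| * xt) := by
  have habs : |dt| ≠ 0 := abs_ne_zero.mpr hd
  have h2 : dt / |dt| * dt = |dt| := by
    rw [div_mul_eq_mul_div, ← abs_mul_abs_self, mul_div_assoc, div_self habs, mul_one]
  rw [mul_sub, h2]; ring

private lemma key_le (dt xt s : ℝ) (hd : dt ≠ 0) :
    |dt| - s * (dt / |dt| * xt) ≤ |dt - s * xt| := by
  have habs : |dt| ≠ 0 := abs_ne_zero.mpr hd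
  calc |dt| - s * (dt / |dt| * xt) = dt / |dt| * (dt - s * xt) := (aux_h1 dt xt s hd).symm
    _ ≤ |dt / |dt| * (dt - s * xt)| := le_abs_self _
    _ = |dt - s * xt| := by rw [abs_mul, abs_div, abs_abs, div_self habs, one_mul]

private lemma key_eq (dt xt s : ℝ) (hd : dt ≠ 0) (hs : |s * xt| ≤ |dt|) :
    |dt - s * xt| = |dt| - s * (dt / |dt| * xt) := by
  have habs : |dt| ≠ 0 := abs_ne_zero.mpr hd
  have habs2 : |s * (dt / |dt| * xt)| = |s * xt| := by
    rw [abs_mul, abs_mul, abs_div, abs_abs, div_self habs, one_mul, ← abs_mul]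
  have hnn : 0 ≤ |dt| - s * (dt / |dt| * xt) := by
    have := le_abs_self (s * (dt / |dt| * xt))
    linarith [habs2 ▸ this]
  calc |dt - s * xt| = |dt / |dt| * (dt - s * xt)| := by
        rw [abs_mul, abs_div, abs_abs, div_self habs, one_mul]
    _ = dt / |dt| * (dt - s * xt) := abs_of_nonneg (by rw [aux_h1 dt xt s hd]; exact hnn)
    _ = |dt| - s * (dt / |dt| * xt) := aux_h1 dt xt s hd

/-- first-order scalar linear system: exact uniqueness condition.
For `x₀ = 0`, `x_{t+1} = ā x_t + d̄_t`, the scalar `ā` is the unique global minimizer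
of `g(a) = Σ_{t<T} |x_{t+1} − a x_t|` iff `|Σ_{t∈K} d̂_t x_t| < Σ_{t∈K^c} |x_t|`,
where `d̂_t = d̄_t / |d̄_t|`. -/
theorem scalar_unique_recovery_iff
    (T : ℕ) (hT : 0 < T)
    (abar : ℝ) (d : ℕ → ℝ) (x : ℕ → ℝ)
    (hx0 : x 0 = 0)
    (hxstep : ∀ t < T, x (t + 1) = abar * x t + d t) :
    (∀ a : ℝ, a ≠ abar →
        ∑ t ∈ Finset.range T, |x (t + 1) - abar * x t| <
          ∑ t ∈ Finset.range T, |x (t + 1) - a * x t|)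
      ↔
    |∑ t ∈ (Finset.range T).filter (fun t => d t ≠ 0), (d t / |d t|) * x t| <
      ∑ t ∈ (Finset.range T).filter (fun t => d t = 0), |x t| := by
  classical
  set K := (Finset.range T).filter (fun t => d t ≠ 0) with hK
  set Kc := (Finset.range T).filter (fun t => d t = 0) with hKc
  set S := ∑ t ∈ K, (d t / |d t|) * x t with hS
  set C := ∑ t ∈ Kc, |x t| with hC
  have hCnn : 0 ≤ C := Finset.sum_nonneg fun t _ => abs_nonneg _
  -- rewrite the loss
  have hsum : ∀ a : ℝ, ∑ t ∈ Finset.range T, |x (t + 1) - a * x t|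
      = ∑ t ∈ Finset.range T, |d t - (a - abar) * x t| := by
    intro a
    refine Finset.sum_congr rfl fun t ht => ?_
    rw [hxstep t (Finset.mem_range.mp ht)]
    congr 1; ring
  have hKcsplit : ∀ s : ℝ, ∑ t ∈ Finset.range T, |d t - s * x t|
      = (∑ t ∈ K, |d t - s * x t|) + |s| * C := by
    intro s
    rw [← Finset.sum_filter_add_sum_filter_not (Finset.range T) (fun t => d t ≠ 0)
        (fun t => |d t - s * x t|)]
    congr 1
    · rw [show (Finset.range T).filter (fun t => ¬ d t ≠ 0) = Kc by
        simp [hKc, Finset.filter_congr_decidable, not_not]]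
      rw [hC, Finset.mul_sum]
      refine Finset.sum_congr rfl fun t ht => ?_
      have hd0 : d t = 0 := (Finset.mem_filter.mp ht).2
      rw [hd0, zero_sub, abs_neg, abs_mul]
  have hg0 : ∑ t ∈ Finset.range T, |d t - (abar - abar) * x t| = ∑ t ∈ K, |d t| := by
    rw [hKcsplit]
    simp
  constructor
  · -- uniqueness → condition, by contradiction
    intro huniq
    by_contra hle
    push_neg at hle  -- C ≤ |S|
    -- choose ε > 0 with ε * |x t| ≤ |d t| on K
    set F : Finset ℝ := insert (1:ℝ) (K.image fun t => |d t| / (|x t| + 1)) with hF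
    have hFne : F.Nonempty := Finset.insert_nonempty _ _
    set ε := F.min' hFne with hε
    have hεpos : 0 < ε := by
      apply (Finset.lt_min'_iff F hFne).mpr
      intro y hy
      rcases Finset.mem_insert.mp hy with h | h
      · rw [h]; norm_num
      · obtain ⟨t, ht, rfl⟩ := Finset.mem_image.mp h
        have hd : d t ≠ 0 := (Finset.mem_filter.mp ht).2
        have : 0 < |d t| := abs_pos.mpr hd
        positivity
    have hεle : ∀ t ∈ K, ε * |x t| ≤ |d t| := by
      intro t ht
      have h1 : ε ≤ |d t| / (|x t| + 1) :=
        Finset.min'_le _ _ (Finset.mem_insert_of_mem (Finset.mem_image_of_mem _ ht))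
      have hx : (0:ℝ) ≤ |x t| := abs_nonneg _
      have hd : 0 ≤ |d t| := abs_nonneg _
      have h2 : ε * |x t| ≤ (|d t| / (|x t| + 1)) * |x t| :=
        mul_le_mul_of_nonneg_right h1 hx
      have h3 : (|d t| / (|x t| + 1)) * |x t| ≤ |d t| := by
        rw [div_mul_eq_mul_div, div_le_iff₀ (by linarith)]
        nlinarith
      linarith
    set σ : ℝ := if 0 ≤ S then 1 else -1 with hσ
    have hσS : σ * S = |S| := by
      by_cases h : 0 ≤ S
      · simp [hσ, h, abs_of_nonneg h]
      · simp [hσ, h, abs_of_neg (lt_of_not_ge h)]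
    have hσabs : |σ| = 1 := by
      by_cases h : 0 ≤ S <;> simp [hσ, h]
    set s := σ * ε with hsdef
    have hsne : s ≠ 0 := by
      have : σ ≠ 0 := by by_cases h : 0 ≤ S <;> simp [hσ, h]
      exact mul_ne_zero this (ne_of_gt hεpos)
    have hsabs : |s| = ε := by rw [hsdef, abs_mul, hσabs, one_mul, abs_of_pos hεpos]
    have := huniq (abar + s) (by intro h; exact hsne (by linarith [h]))
    rw [hsum (abar + s), hsum abar, hg0] at this
    have harg : abar + s - abar = s := by ring
    rw [harg, hKcsplit] at this
    have hKeq : ∑ t ∈ K, |d t - s * x t| = (∑ t ∈ K, |d t|) - s * S := by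
      rw [hS, Finset.mul_sum, ← Finset.sum_sub_distrib]
      refine Finset.sum_congr rfl fun t ht => ?_
      have hd : d t ≠ 0 := (Finset.mem_filter.mp ht).2
      have : |s * x t| ≤ |d t| := by
        rw [abs_mul, hsabs]; exact hεle t ht
      rw [key_eq (d t) (x t) s hd this]
    rw [hKeq, hsabs] at this
    have hsS : s * S = ε * |S| := by rw [hsdef, mul_assoc, mul_comm ε S, ← mul_assoc, hσS, mul_comm]
    rw [hsS] at this
    nlinarith
  · -- condition → uniqueness
    intro hcond a hne
    rw [hsum a, hsum abar, hg0, hKcsplit]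
    set s := a - abar with hsdef
    have hsne : s ≠ 0 := sub_ne_zero.mpr hne
    have hsabs : 0 < |s| := abs_pos.mpr hsne
    have hKge : (∑ t ∈ K, |d t|) - s * S ≤ ∑ t ∈ K, |d t - s * x t| := by
      rw [hS, Finset.mul_sum, ← Finset.sum_sub_distrib]
      refine Finset.sum_le_sum fun t ht => ?_
      have hd : d t ≠ 0 := (Finset.mem_filter.mp ht).2
      have := key_le (d t) (x t) s hd
      linarith
    have hsS : s * S ≤ |s| * |S| := by
      calc s * S ≤ |s * S| := le_abs_self _
        _ = |s| * |S| := abs_mul _ _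
    have : |s| * |S| < |s| * C := mul_lt_mul_of_pos_left hcond hsabs
    linarith
end

section
/- Let p ∈ (0,1), let T ≥ 2 be an integer, and let b₀, b₁, …, b_{T−1} be independent Bernoulli(p) random variables. Define K' := { t ∈ {1,…,T−1} : b_{t−1} = 1 and b_t = 0 }. Then P( |K'| ≤ 2 p(1−p) T ) ≥ 1 − exp( −p(1−p)⌈T/2⌉/3 ) − exp( −p(1−p)⌊T/2⌋/3 ). -/
open MeasureTheory
open scoped BigOperators
open ProbabilityTheory

lemma exp_mul_indicator_eq {Ω : Type*} (E : Set Ω) (t : ℝ) (ω : Ω) :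
    Real.exp (t * (E.indicator (fun _ => (1:ℝ)) ω)) =
      1 + E.indicator (fun _ => Real.exp t - 1) ω := by
  classical
  by_cases h : ω ∈ E
  · simp [Set.indicator_of_mem h]
  · simp [Set.indicator_of_notMem h]

lemma integrable_exp_mul_indicator {Ω : Type*} [MeasurableSpace Ω] (μ : Measure Ω)
    [IsFiniteMeasure μ] (E : Set Ω) (hE : MeasurableSet E) (t : ℝ) :
    Integrable (fun ω => Real.exp (t * (E.indicator (fun _ => (1:ℝ)) ω))) μ := by
  have h : (fun ω => Real.exp (t * (E.indicator (fun _ => (1:ℝ)) ω)))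
      = fun ω => 1 + E.indicator (fun _ => Real.exp t - 1) ω :=
    funext (exp_mul_indicator_eq E t)
  rw [h]
  exact (integrable_const 1).add
    ((integrable_indicator_iff hE).2 (integrableOn_const (measure_ne_top μ E)))

lemma mgf_indicator {Ω : Type*} [MeasurableSpace Ω] (μ : Measure Ω) [IsProbabilityMeasure μ]
    (E : Set Ω) (hE : MeasurableSet E) (t : ℝ) :
    mgf (E.indicator (fun _ => (1:ℝ))) μ t = 1 + (Real.exp t - 1) * (μ E).toReal := by
  have h : (fun ω => Real.exp (t * (E.indicator (fun _ => (1:ℝ)) ω)))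
      = fun ω => 1 + E.indicator (fun _ => Real.exp t - 1) ω :=
    funext (exp_mul_indicator_eq E t)
  rw [mgf, h, integral_add (integrable_const 1)
    ((integrable_indicator_iff hE).2 (integrableOn_const (measure_ne_top μ E))),
    integral_const, integral_indicator_const _ hE]
  simp [mul_comm]
  exact Or.inl rfl

lemma chernoff_aux {Ω : Type*} [MeasurableSpace Ω] (μ : Measure Ω) [IsProbabilityMeasure μ]
    {ι : Type*} [Fintype ι] (E : ι → Set Ω) (hE : ∀ i, MeasurableSet (E i))
    (hind : iIndepSet E μ)
    {q : ℝ} (hq0 : 0 ≤ q) (hq : ∀ i, (μ (E i)).toReal = q)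
    (N : ℕ) (hcard : Fintype.card ι ≤ N) :
    μ {ω | 2 * q * N ≤ ∑ i, (E i).indicator (fun _ => (1:ℝ)) ω}
      ≤ ENNReal.ofReal (Real.exp (-(q * N) / 3)) := by
  classical
  set X : ι → Ω → ℝ := fun i => (E i).indicator (fun _ => 1) with hX
  have hXmeas : ∀ i, Measurable (X i) := fun i => measurable_const.indicator (hE i)
  have hindX : iIndepFun X μ := hind.iIndepFun_indicator
  set t : ℝ := Real.log 2 with ht_def
  have ht : 0 ≤ t := Real.log_nonneg one_le_two
  have het : Real.exp t = 2 := Real.exp_log two_pos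
  have hint : ∀ i ∈ Finset.univ, Integrable (fun ω => Real.exp (t * X i ω)) μ :=
    fun i _ => integrable_exp_mul_indicator μ _ (hE i) t
  have hmgf : mgf (∑ i, X i) μ t = (1 + (Real.exp t - 1) * q) ^ Fintype.card ι := by
    rw [hindX.mgf_sum hXmeas]
    have hterm : ∀ i : ι, mgf ((E i).indicator fun _ => (1:ℝ)) μ t
        = 1 + (Real.exp t - 1) * q := fun i => by rw [mgf_indicator μ _ (hE i) t, hq i]
    simp only [hX, hterm, Finset.prod_const, Finset.card_univ]
  have key := measure_ge_le_exp_mul_mgf (μ := μ) (X := ∑ i, X i) (t := t) (2*q*N) ht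
      (hindX.integrable_exp_mul_sum hXmeas hint)
  rw [hmgf] at key
  -- bound RHS
  have hxq : 0 ≤ (Real.exp t - 1) * q := mul_nonneg (by rw [het]; norm_num) hq0
  have h1 : (1 + (Real.exp t - 1) * q) ^ Fintype.card ι
      ≤ Real.exp ((Real.exp t - 1) * q * N) := by
    calc (1 + (Real.exp t - 1) * q) ^ Fintype.card ι
        ≤ Real.exp ((Real.exp t - 1) * q) ^ Fintype.card ι := by
          apply pow_le_pow_left₀ (by linarith)
          linarith [Real.add_one_le_exp ((Real.exp t - 1) * q)]
      _ = Real.exp ((Real.exp t - 1) * q * Fintype.card ι) := by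
          rw [← Real.exp_nat_mul]; ring_nf
      _ ≤ Real.exp ((Real.exp t - 1) * q * N) := by
          apply Real.exp_le_exp.2
          apply mul_le_mul_of_nonneg_left _ hxq
          exact_mod_cast hcard
  have hbound : Real.exp (-t * (2*q*N)) * (1 + (Real.exp t - 1) * q) ^ Fintype.card ι
      ≤ Real.exp (-(q * N) / 3) := by
    calc Real.exp (-t * (2*q*N)) * (1 + (Real.exp t - 1) * q) ^ Fintype.card ι
        ≤ Real.exp (-t * (2*q*N)) * Real.exp ((Real.exp t - 1) * q * N) := by
          apply mul_le_mul_of_nonneg_left h1 (Real.exp_nonneg _)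
      _ = Real.exp (-t * (2*q*N) + (Real.exp t - 1) * q * N) := (Real.exp_add _ _).symm
      _ ≤ Real.exp (-(q * N) / 3) := by
          apply Real.exp_le_exp.2
          rw [het]
          have hlog : (0.6931471803 : ℝ) < t := Real.log_two_gt_d9
          have hqN : 0 ≤ q * (N:ℝ) := mul_nonneg hq0 (Nat.cast_nonneg N)
          nlinarith [hqN, hlog]
  have hne : μ {ω | 2 * q * N ≤ ∑ i, (E i).indicator (fun _ => (1:ℝ)) ω} ≠ ⊤ :=
    measure_ne_top μ _
  have hsetq : {ω | 2 * q * N ≤ ∑ i, (E i).indicator (fun _ => (1:ℝ)) ω}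
      = {ω | 2 * q * N ≤ (∑ i, X i) ω} := by
    ext ω; simp [hX, Finset.sum_apply]
  rw [hsetq]
  rw [← ENNReal.ofReal_toReal (measure_ne_top μ _)]
  exact ENNReal.ofReal_le_ofReal (key.trans hbound)

/-- Chernoff bound on clean steps following attacks.
Let `b₀,…,b_{T−1}` be independent `Bernoulli(p)` indicators and
`K' = {t ∈ {1,…,T−1} : b_{t−1} = 1, b_t = 0}`. Then
`P(|K'| ≤ 2p(1−p)T) ≥ 1 − exp(−p(1−p)⌈T/2⌉/3) − exp(−p(1−p)⌊T/2⌋/3)`. -/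
theorem chernoff_clean_after_attack
    {Ω : Type*} [MeasurableSpace Ω] (μ : Measure Ω) [IsProbabilityMeasure μ]
    (p : ℝ) (hp : p ∈ Set.Ioo (0 : ℝ) 1) (T : ℕ) (hT : 2 ≤ T)
    (b : Fin T → Ω → Bool)
    (hmeas : ∀ t, Measurable (b t))
    (hind : ProbabilityTheory.iIndepFun b μ)
    (hbern : ∀ t, μ {ω | b t ω = true} = ENNReal.ofReal p) :
    ENNReal.ofReal
        (1 - Real.exp (-(p * (1 - p) * (((T + 1) / 2 : ℕ) : ℝ)) / 3)
           - Real.exp (-(p * (1 - p) * ((T / 2 : ℕ) : ℝ)) / 3)) ≤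
      μ {ω |
          ((Finset.univ.filter (fun t : Fin T =>
              1 ≤ (t : ℕ) ∧
              b ⟨(t : ℕ) - 1, lt_of_le_of_lt (Nat.sub_le _ _) t.isLt⟩ ω = true ∧
              b t ω = false)).card : ℝ)
            ≤ 2 * p * (1 - p) * T} := by
  classical
  obtain ⟨hp0, hp1⟩ := hp
  have h1p : (0:ℝ) < 1 - p := by linarith
  set q : ℝ := p * (1 - p) with hqdef
  have hq0 : 0 ≤ q := le_of_lt (mul_pos hp0 h1p)
  set pred : Fin T → Fin T :=
    fun t => ⟨(t : ℕ) - 1, lt_of_le_of_lt (Nat.sub_le _ _) t.isLt⟩ with hpred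
  set E : Fin T → Set Ω := fun t => {ω | b (pred t) ω = true ∧ b t ω = false} with hE_def
  have hE : ∀ t, MeasurableSet (E t) := by
    intro t
    have h1 : MeasurableSet {ω | b (pred t) ω = true} :=
      hmeas (pred t) (measurableSet_singleton true)
    have h2 : MeasurableSet {ω | b t ω = false} :=
      hmeas t (measurableSet_singleton false)
    have he : E t = {ω | b (pred t) ω = true} ∩ {ω | b t ω = false} := by
      ext ω; simp [hE_def, Set.mem_setOf_eq]
    rw [he]; exact h1.inter h2
  have hbfalse : ∀ i, μ {ω | b i ω = false} = ENNReal.ofReal (1 - p) := by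
    intro i
    have hc : {ω | b i ω = false} = {ω | b i ω = true}ᶜ := by
      ext ω; simp
    have hmT : MeasurableSet {ω | b i ω = true} := hmeas i (measurableSet_singleton true)
    rw [hc, measure_compl hmT (measure_ne_top μ _),
      measure_univ, hbern i, ← ENNReal.ofReal_one, ← ENNReal.ofReal_sub 1 hp0.le]
  -- block independence of the events E over "spread-out" index sets
  have hblocks : ∀ s : Finset (Fin T),
      (∀ t ∈ s, 1 ≤ (t:ℕ)) →
      (∀ t ∈ s, ∀ t' ∈ s, (t:ℕ) - 1 = (t':ℕ) → False) →
      (∀ t ∈ s, ∀ t' ∈ s, (t:ℕ) - 1 = (t':ℕ) - 1 → t = t') →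
      μ (⋂ t ∈ s, E t) = (ENNReal.ofReal p * ENNReal.ofReal (1 - p)) ^ s.card := by
    intro s h1 h2 h3
    set g : Fin T → Set Ω :=
      fun i => if i ∈ s then {ω | b i ω = false} else {ω | b i ω = true} with hg
    have hdisj : Disjoint (s.image pred) s := by
      rw [Finset.disjoint_left]
      intro a ha has
      obtain ⟨t', ht', hpt'⟩ := Finset.mem_image.1 ha
      apply h2 t' ht' a has
      rw [← hpt']
    have hSeq : (⋂ t ∈ s, E t) = ⋂ i ∈ (s.image pred ∪ s), g i := by
      ext ω
      simp only [Set.mem_iInter]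
      constructor
      · intro h i hi
        rcases Finset.mem_union.1 hi with him | his
        · obtain ⟨t', ht', rfl⟩ := Finset.mem_image.1 him
          have hns : pred t' ∉ s := Finset.disjoint_left.1 hdisj
            (Finset.mem_image_of_mem pred ht')
          have := (h t' ht')
          rw [hE_def] at this
          simp only [hg, if_neg hns]
          exact this.1
        · have := (h i his)
          rw [hE_def] at this
          simp only [hg, if_pos his]
          exact this.2
      · intro h t ht
        have hns : pred t ∉ s := Finset.disjoint_left.1 hdisj
          (Finset.mem_image_of_mem pred ht)
        have h1' := h (pred t) (Finset.mem_union_left _ (Finset.mem_image_of_mem pred ht))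
        have h2' := h t (Finset.mem_union_right _ ht)
        simp only [hg, if_neg hns, if_pos ht] at h1' h2'
        rw [hE_def]
        exact ⟨h1', h2'⟩
    have hgm : ∀ i, MeasurableSet[(inferInstance : MeasurableSpace Bool).comap (b i)] (g i) := by
      intro i
      by_cases his : i ∈ s
      · simp only [hg, if_pos his]
        exact ⟨{false}, measurableSet_singleton _, rfl⟩
      · simp only [hg, if_neg his]
        exact ⟨{true}, measurableSet_singleton _, rfl⟩
    have hprod := hind.meas_biInter (S := s.image pred ∪ s) (s := g) (fun i _ => hgm i)
    rw [hSeq, hprod, Finset.prod_union hdisj]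
    have hinj : ∀ t ∈ s, ∀ t' ∈ s, pred t = pred t' → t = t' := by
      intro t ht t' ht' h
      exact h3 t ht t' ht' (congrArg Fin.val h)
    rw [Finset.prod_image hinj]
    have hgp : ∀ t ∈ s, μ (g (pred t)) = ENNReal.ofReal p := by
      intro t ht
      have hns : pred t ∉ s := Finset.disjoint_left.1 hdisj
        (Finset.mem_image_of_mem pred ht)
      simp only [hg, if_neg hns]
      exact hbern _
    have hgs : ∀ t ∈ s, μ (g t) = ENNReal.ofReal (1 - p) := by
      intro t ht
      simp only [hg, if_pos ht]
      exact hbfalse t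
    rw [Finset.prod_congr rfl hgp, Finset.prod_congr rfl hgs, Finset.prod_const,
      Finset.prod_const, ← mul_pow]
  have measE : ∀ t : Fin T, 1 ≤ (t:ℕ) →
      μ (E t) = ENNReal.ofReal p * ENNReal.ofReal (1 - p) := by
    intro t ht
    have h := hblocks {t} (by simpa using ht)
      (by intro a ha b' hb' hab
          simp only [Finset.mem_singleton] at ha hb'
          subst ha; subst hb'; omega)
      (by intro a ha b' hb' _
          simp only [Finset.mem_singleton] at ha hb'
          subst ha; subst hb'; rfl)
    simpa using h
  -- the per-parity-class bound
  have main : ∀ (A : Finset (Fin T)) (N : ℕ),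
      (∀ t ∈ A, 1 ≤ (t:ℕ)) →
      (∀ t ∈ A, ∀ t' ∈ A, (t:ℕ) - 1 = (t':ℕ) → False) →
      (∀ t ∈ A, ∀ t' ∈ A, (t:ℕ) - 1 = (t':ℕ) - 1 → t = t') →
      A.card ≤ N →
      μ {ω | 2 * q * N ≤ ∑ t ∈ A, (E t).indicator (fun _ => (1:ℝ)) ω}
        ≤ ENNReal.ofReal (Real.exp (-(q * N) / 3)) := by
    intro A N hA1 hA2 hA3 hAcard
    have hindA : iIndepSet (fun i : ↥A => E ↑i) μ := by
      rw [iIndepSet_iff_meas_biInter (fun i : ↥A => hE ↑i)]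
      intro s
      have himg1 : ∀ t ∈ s.image (fun i : ↥A => (i : Fin T)), 1 ≤ (t:ℕ) := by
        intro t ht
        obtain ⟨i, _, rfl⟩ := Finset.mem_image.1 ht
        exact hA1 i.1 i.2
      have himg2 : ∀ t ∈ s.image (fun i : ↥A => (i : Fin T)),
          ∀ t' ∈ s.image (fun i : ↥A => (i : Fin T)), (t:ℕ) - 1 = (t':ℕ) → False := by
        intro t ht t' ht' h
        obtain ⟨i, _, rfl⟩ := Finset.mem_image.1 ht
        obtain ⟨i', _, rfl⟩ := Finset.mem_image.1 ht'
        exact hA2 i.1 i.2 i'.1 i'.2 h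
      have himg3 : ∀ t ∈ s.image (fun i : ↥A => (i : Fin T)),
          ∀ t' ∈ s.image (fun i : ↥A => (i : Fin T)), (t:ℕ) - 1 = (t':ℕ) - 1 → t = t' := by
        intro t ht t' ht' h
        obtain ⟨i, _, rfl⟩ := Finset.mem_image.1 ht
        obtain ⟨i', _, rfl⟩ := Finset.mem_image.1 ht'
        exact hA3 i.1 i.2 i'.1 i'.2 h
      have hb := hblocks (s.image (fun i : ↥A => (i : Fin T))) himg1 himg2 himg3
      have hiInter : (⋂ i ∈ s, E ↑i) = ⋂ t ∈ s.image (fun i : ↥A => (i : Fin T)), E t := by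
        ext ω
        simp only [Set.mem_iInter, Finset.mem_image]
        constructor
        · rintro h t ⟨i, hi, rfl⟩
          exact h i hi
        · intro h i hi
          exact h ↑i ⟨i, hi, rfl⟩
      have hcardimg : (s.image (fun i : ↥A => (i : Fin T))).card = s.card :=
        Finset.card_image_of_injective s Subtype.coe_injective
      rw [hiInter, hb, hcardimg]
      exact ((Finset.prod_congr rfl (fun i _ => measE i.1 (hA1 i.1 i.2))).trans
        (Finset.prod_const _)).symm
    have hqE : ∀ i : ↥A, (μ (E ↑i)).toReal = q := by
      intro i
      rw [measE _ (hA1 i.1 i.2), ENNReal.toReal_mul, ENNReal.toReal_ofReal hp0.le,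
        ENNReal.toReal_ofReal h1p.le]
    have hch := chernoff_aux μ (fun i : ↥A => E ↑i) (fun i => hE ↑i) hindA hq0 hqE N
      (by rwa [Fintype.card_coe])
    have hset : {ω | 2 * q * N ≤ ∑ i : ↥A, (E ↑i).indicator (fun _ => (1:ℝ)) ω}
        = {ω | 2 * q * N ≤ ∑ t ∈ A, (E t).indicator (fun _ => (1:ℝ)) ω} := by
      ext ω
      rw [Set.mem_setOf_eq, Set.mem_setOf_eq,
        Finset.sum_coe_sort A (fun t => (E t).indicator (fun _ => (1:ℝ)) ω)]
    rwa [hset] at hch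
  -- parity classes
  set N1 : ℕ := (T + 1) / 2 with hN1
  set N2 : ℕ := T / 2 with hN2
  set A1 : Finset (Fin T) := Finset.univ.filter (fun t => (t:ℕ) % 2 = 1) with hA1def
  set A2 : Finset (Fin T) :=
    Finset.univ.filter (fun t => 1 ≤ (t:ℕ) ∧ (t:ℕ) % 2 = 0) with hA2def
  have hmemA1 : ∀ t : Fin T, t ∈ A1 ↔ (t:ℕ) % 2 = 1 := by
    intro t; simp [hA1def]
  have hmemA2 : ∀ t : Fin T, t ∈ A2 ↔ (1 ≤ (t:ℕ) ∧ (t:ℕ) % 2 = 0) := by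
    intro t; simp [hA2def]
  have hcard1 : A1.card ≤ N1 := by
    have h : A1.card ≤ (Finset.range N1).card := by
      apply Finset.card_le_card_of_injOn (fun t : Fin T => (t:ℕ) / 2)
      · intro t ht
        have h1 := (hmemA1 t).1 ht
        have h2 := t.isLt
        simp only [Finset.mem_coe, Finset.mem_range]
        omega
      · intro a ha bb hb hab
        have h1 := (hmemA1 a).1 (Finset.mem_coe.1 ha)
        have h2 := (hmemA1 bb).1 (Finset.mem_coe.1 hb)
        have hab' : (a:ℕ)/2 = (bb:ℕ)/2 := hab
        exact Fin.ext (by omega)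
    simpa using h
  have hcard2 : A2.card ≤ N2 := by
    have h : A2.card ≤ (Finset.range N2).card := by
      apply Finset.card_le_card_of_injOn (fun t : Fin T => (t:ℕ) / 2 - 1)
      · intro t ht
        have h1 := (hmemA2 t).1 ht
        have h2 := t.isLt
        simp only [Finset.mem_coe, Finset.mem_range]
        omega
      · intro a ha bb hb hab
        have h1 := (hmemA2 a).1 (Finset.mem_coe.1 ha)
        have h2 := (hmemA2 bb).1 (Finset.mem_coe.1 hb)
        have hab' : (a:ℕ)/2 - 1 = (bb:ℕ)/2 - 1 := hab
        exact Fin.ext (by omega)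
    simpa using h
  have hmain1 := main A1 N1
    (fun t ht => by have := (hmemA1 t).1 ht; omega)
    (fun t ht t' ht' h => by
      have h1 := (hmemA1 t).1 ht; have h2 := (hmemA1 t').1 ht'; omega)
    (fun t ht t' ht' h => by
      have h1 := (hmemA1 t).1 ht; have h2 := (hmemA1 t').1 ht'
      exact Fin.ext (by omega))
    hcard1
  have hmain2 := main A2 N2
    (fun t ht => ((hmemA2 t).1 ht).1)
    (fun t ht t' ht' h => by
      have h1 := (hmemA2 t).1 ht; have h2 := (hmemA2 t').1 ht'; omega)
    (fun t ht t' ht' h => by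
      have h1 := (hmemA2 t).1 ht; have h2 := (hmemA2 t').1 ht'
      exact Fin.ext (by omega))
    hcard2
  have hdisjA : Disjoint A1 A2 := by
    rw [Finset.disjoint_left]
    intro a ha1 ha2
    have h1 := (hmemA1 a).1 ha1
    have h2 := (hmemA2 a).1 ha2
    omega
  -- pointwise bound of the count by the two partial sums
  have hkey : ∀ ω, ((Finset.univ.filter (fun t : Fin T =>
        1 ≤ (t : ℕ) ∧
        b ⟨(t : ℕ) - 1, lt_of_le_of_lt (Nat.sub_le _ _) t.isLt⟩ ω = true ∧
        b t ω = false)).card : ℝ)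
      ≤ (∑ t ∈ A1, (E t).indicator (fun _ => (1:ℝ)) ω)
        + ∑ t ∈ A2, (E t).indicator (fun _ => (1:ℝ)) ω := by
    intro ω
    rw [Finset.card_filter]
    push_cast
    rw [← Finset.sum_union hdisjA]
    refine le_trans (le_of_eq (Finset.sum_subset (Finset.subset_univ (A1 ∪ A2)) ?_).symm)
      (Finset.sum_le_sum ?_)
    · intro t _ ht
      have hP : ¬(1 ≤ (t:ℕ) ∧
          b ⟨(t:ℕ)-1, lt_of_le_of_lt (Nat.sub_le _ _) t.isLt⟩ ω = true ∧
          b t ω = false) := by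
        rw [Finset.mem_union] at ht
        push_neg at ht
        intro hcon
        have hn1 : ¬ (t:ℕ) % 2 = 1 := fun h => ht.1 ((hmemA1 t).2 h)
        have hn2 : ¬ (1 ≤ (t:ℕ) ∧ (t:ℕ) % 2 = 0) := fun h => ht.2 ((hmemA2 t).2 h)
        have := hcon.1
        omega
      rw [if_neg hP]
    · intro t _
      by_cases hc : (1 ≤ (t:ℕ) ∧
          b ⟨(t:ℕ)-1, lt_of_le_of_lt (Nat.sub_le _ _) t.isLt⟩ ω = true ∧
          b t ω = false)
      · rw [if_pos hc, Set.indicator_of_mem (show ω ∈ E t from hc.2)]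
      · rw [if_neg hc]
        exact Set.indicator_apply_nonneg (fun _ => zero_le_one)
  -- measurability of the goal set
  have hGmeas : MeasurableSet {ω | ((Finset.univ.filter (fun t : Fin T =>
      1 ≤ (t : ℕ) ∧
      b ⟨(t : ℕ) - 1, lt_of_le_of_lt (Nat.sub_le _ _) t.isLt⟩ ω = true ∧
      b t ω = false)).card : ℝ) ≤ 2 * p * (1 - p) * T} := by
    have hm : Measurable (fun ω => ((Finset.univ.filter (fun t : Fin T =>
        1 ≤ (t : ℕ) ∧
        b ⟨(t : ℕ) - 1, lt_of_le_of_lt (Nat.sub_le _ _) t.isLt⟩ ω = true ∧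
        b t ω = false)).card : ℝ)) := by
      have hceq : (fun ω => ((Finset.univ.filter (fun t : Fin T =>
          1 ≤ (t : ℕ) ∧
          b ⟨(t : ℕ) - 1, lt_of_le_of_lt (Nat.sub_le _ _) t.isLt⟩ ω = true ∧
          b t ω = false)).card : ℝ))
          = fun ω => ∑ t : Fin T, (if (1 ≤ (t:ℕ) ∧
              b ⟨(t:ℕ)-1, lt_of_le_of_lt (Nat.sub_le _ _) t.isLt⟩ ω = true ∧
              b t ω = false) then (1:ℝ) else 0) := by
        funext ω
        rw [Finset.card_filter]
        push_cast
        rfl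
      rw [hceq]
      apply Finset.measurable_sum
      intro t _
      have hset : MeasurableSet {ω | 1 ≤ (t:ℕ) ∧
          b ⟨(t:ℕ)-1, lt_of_le_of_lt (Nat.sub_le _ _) t.isLt⟩ ω = true ∧
          b t ω = false} := by
        by_cases h : 1 ≤ (t:ℕ)
        · have he : {ω | 1 ≤ (t:ℕ) ∧
              b ⟨(t:ℕ)-1, lt_of_le_of_lt (Nat.sub_le _ _) t.isLt⟩ ω = true ∧
              b t ω = false} = E t := by
            ext ω; simp [hE_def, hpred, h]
          rw [he]; exact hE t
        · have he : {ω | 1 ≤ (t:ℕ) ∧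
              b ⟨(t:ℕ)-1, lt_of_le_of_lt (Nat.sub_le _ _) t.isLt⟩ ω = true ∧
              b t ω = false} = ∅ := by
            ext ω; simp [h]
          rw [he]; exact MeasurableSet.empty
      exact Measurable.ite hset measurable_const measurable_const
    exact measurableSet_le hm measurable_const
  -- the complement of the goal event is contained in the union of the two tail events
  have hsub : {ω | ((Finset.univ.filter (fun t : Fin T =>
        1 ≤ (t : ℕ) ∧
        b ⟨(t : ℕ) - 1, lt_of_le_of_lt (Nat.sub_le _ _) t.isLt⟩ ω = true ∧
        b t ω = false)).card : ℝ) ≤ 2 * p * (1 - p) * T}ᶜ ⊆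
      {ω | 2 * q * (N1:ℝ) ≤ ∑ t ∈ A1, (E t).indicator (fun _ => (1:ℝ)) ω}
      ∪ {ω | 2 * q * (N2:ℝ) ≤ ∑ t ∈ A2, (E t).indicator (fun _ => (1:ℝ)) ω} := by
    intro ω hω
    simp only [Set.mem_compl_iff, Set.mem_setOf_eq, not_le] at hω
    by_contra hcon
    simp only [Set.mem_union, Set.mem_setOf_eq, not_or, not_le] at hcon
    have hNT : (N1:ℝ) + (N2:ℝ) = (T:ℝ) := by
      have hnat : N1 + N2 = T := by omega
      exact_mod_cast congrArg (Nat.cast : ℕ → ℝ) hnat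
    have h2q : 2 * p * (1 - p) * (T:ℝ) = 2 * q * (N1:ℝ) + 2 * q * (N2:ℝ) := by
      rw [hqdef, ← hNT]; ring
    have hk := hkey ω
    linarith [hcon.1, hcon.2]
  calc ENNReal.ofReal (1 - Real.exp (-(q * (N1:ℝ)) / 3) - Real.exp (-(q * (N2:ℝ)) / 3))
      = 1 - ENNReal.ofReal (Real.exp (-(q * (N1:ℝ)) / 3))
          - ENNReal.ofReal (Real.exp (-(q * (N2:ℝ)) / 3)) := by
        rw [ENNReal.ofReal_sub _ (Real.exp_nonneg _), ENNReal.ofReal_sub _ (Real.exp_nonneg _),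
          ENNReal.ofReal_one]
    _ = 1 - (ENNReal.ofReal (Real.exp (-(q * (N1:ℝ)) / 3))
          + ENNReal.ofReal (Real.exp (-(q * (N2:ℝ)) / 3))) := by rw [tsub_tsub]
    _ ≤ 1 - μ {ω | ((Finset.univ.filter (fun t : Fin T =>
          1 ≤ (t : ℕ) ∧
          b ⟨(t : ℕ) - 1, lt_of_le_of_lt (Nat.sub_le _ _) t.isLt⟩ ω = true ∧
          b t ω = false)).card : ℝ) ≤ 2 * p * (1 - p) * T}ᶜ := by
        refine tsub_le_tsub_left ?_ 1
        refine le_trans (measure_mono hsub) (le_trans (measure_union_le _ _) ?_)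
        exact add_le_add hmain1 hmain2
    _ = μ {ω | ((Finset.univ.filter (fun t : Fin T =>
          1 ≤ (t : ℕ) ∧
          b ⟨(t : ℕ) - 1, lt_of_le_of_lt (Nat.sub_le _ _) t.isLt⟩ ω = true ∧
          b t ω = false)).card : ℝ) ≤ 2 * p * (1 - p) * T} := by
        rw [prob_compl_eq_one_sub hGmeas,
          ENNReal.sub_sub_cancel ENNReal.one_ne_top prob_le_one]
end
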